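/- With the notation of the model, for all η ∈ V and n ∈ ℕ one has [F, b∘a] η_n = −λ qⁿ λ_n λ_{n−1} (w⁻¹Tη)_{n−2} − λ q^{3n+2} (w⁻¹Sη)_n, where [F, X] := F∘X − X∘F. -/
import Mathlib


/-- `lam q n = λ_n = (1 - q^(2n))^(1/2)`, so `lam q 0 = 0`. -/
noncomputable def lam (q : ℝ) (n : ℕ) : ℝ := Real.sqrt (1 - q ^ (2 * n))

/-- Section 6 of the paper: the commutator `[F, π(x₊)]` for `x₊ = ba`, a generator of the Podles sphere algebra `𝒪(S²_q)`. -/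
theorem commutator_F_ba
    (q : ℝ) (hq0 : 0 < q) (hq1 : q < 1)
    (V : Type*) [AddCommGroup V] [Module ℂ V]
    (w : V ≃ₗ[ℂ] V) (T S R : V →ₗ[ℂ] V)
    (hT : ∀ η : V, w (T (w.symm η)) = (q : ℂ) • T η)
    (hS : ∀ η : V, w (S (w.symm η)) = (q : ℂ) • S η)
    (hR : ∀ η : V, w (w (R (w.symm (w.symm η)))) + ((q ^ 2 : ℝ) : ℂ) • R η
            = ((1 + q ^ 2 : ℝ) : ℂ) • w (R (w.symm η)))
    (a b c d F : (ℕ →₀ V) →ₗ[ℂ] (ℕ →₀ V))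
    (ha : ∀ (η : V) (n : ℕ),
      a (Finsupp.single n η) = (lam q n : ℂ) • Finsupp.single (n - 1) η)
    (hb : ∀ (η : V) (n : ℕ),
      b (Finsupp.single n η) = -(((q ^ (n + 1) : ℝ)) : ℂ) • Finsupp.single n (w.symm η))
    (hc : ∀ (η : V) (n : ℕ),
      c (Finsupp.single n η) = ((q ^ n : ℝ) : ℂ) • Finsupp.single n (w η))
    (hd : ∀ (η : V) (n : ℕ),
      d (Finsupp.single n η) = (lam q (n + 1) : ℂ) • Finsupp.single (n + 1) η)
    (hF : ∀ (η : V) (n : ℕ),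
      F (Finsupp.single n η) = (lam q n : ℂ) • Finsupp.single (n - 1) (T η)
        + Finsupp.single n ((w ^ n) (R ((w.symm ^ n) η)))
        + (lam q (n + 1) : ℂ) • Finsupp.single (n + 1) (S η))
    :
    ∀ (η : V) (n : ℕ),
      (F ∘ₗ (b ∘ₗ a) - (b ∘ₗ a) ∘ₗ F) (Finsupp.single n η)
        = -(((q - q⁻¹) * q ^ n * lam q n * lam q (n - 1) : ℝ) : ℂ) •
              Finsupp.single (n - 2) (w.symm (T η))
          - (((q - q⁻¹) * q ^ (3 * n + 2) : ℝ) : ℂ) • Finsupp.single n (w.symm (S η)) := by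
  have hq : (q:ℝ) ≠ 0 := ne_of_gt hq0
  have hqC : (q:ℂ) ≠ 0 := by exact_mod_cast hq
  have hlam0 : lam q 0 = 0 := by simp [lam]
  have hlamsq : ∀ n : ℕ, ((lam q n : ℝ) : ℂ)^2 = 1 - (q:ℂ)^(2*n) := by
    intro n
    have h1 : q ^ (2*n) ≤ 1 := pow_le_one₀ hq0.le hq1.le
    have : (lam q n)^2 = 1 - q^(2*n) := Real.sq_sqrt (by linarith)
    exact_mod_cast congrArg (Complex.ofReal) this
  have hT' : ∀ η : V, T (w.symm η) = (q:ℂ) • w.symm (T η) := by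
    intro η
    have h1 : T (w.symm η) = w.symm ((q:ℂ) • T η) := by
      simpa using congrArg w.symm (hT η)
    rw [map_smul] at h1; exact h1
  have hS' : ∀ η : V, S (w.symm η) = (q:ℂ) • w.symm (S η) := by
    intro η
    have h1 : S (w.symm η) = w.symm ((q:ℂ) • S η) := by
      simpa using congrArg w.symm (hS η)
    rw [map_smul] at h1; exact h1
  have hmid : ∀ (k:ℕ) (η:V),
      w.symm ((w^(k+1)) (R ((w.symm^(k+1)) η))) = (w^k) (R ((w.symm^k) (w.symm η))) := by
    intro k η
    rw [LinearEquiv.pow_apply, LinearEquiv.pow_apply, LinearEquiv.pow_apply,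
      LinearEquiv.pow_apply, Function.iterate_succ_apply' w,
      Function.iterate_succ_apply w.symm, w.symm_apply_apply]
  intro η n
  match n with
  | 0 =>
    simp only [LinearMap.sub_apply, LinearMap.comp_apply, ha, hb, hF, map_smul, map_add,
      map_neg, hlam0, Complex.ofReal_zero, zero_smul, smul_zero, map_zero, zero_sub,
      Nat.zero_sub, Nat.sub_self, pow_zero, one_smul, neg_neg, zero_add]
    match_scalars <;> (push_cast; ring_nf; try simp only [hlamsq]; try field_simp [hqC]; try ring)
  | 1 =>
    simp only [LinearMap.sub_apply, LinearMap.comp_apply, ha, hb, hF, map_smul, map_add,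
      map_neg, hlam0, Complex.ofReal_zero, zero_smul, smul_zero, map_zero, zero_sub,
      Nat.zero_sub, Nat.sub_self, pow_zero, one_smul, neg_neg, zero_add, add_zero,
      Nat.add_sub_cancel, Nat.succ_sub_one, hT', hS', hmid, ← Finsupp.smul_single]
    match_scalars <;> (push_cast; ring_nf; try simp only [hlamsq]; try field_simp [hqC]; try ring)
  | (m+2) =>
    simp only [LinearMap.sub_apply, LinearMap.comp_apply, ha, hb, hF, map_smul, map_add,
      map_neg, hlam0, Complex.ofReal_zero, zero_smul, smul_zero, map_zero, zero_sub,
      Nat.zero_sub, Nat.sub_self, pow_zero, one_smul, neg_neg, zero_add, add_zero,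
      Nat.add_sub_cancel, Nat.succ_sub_one, hT', hS', hmid, ← Finsupp.smul_single]
    match_scalars
    all_goals (push_cast; ring_nf)
    all_goals try simp only [hlamsq]
    all_goals field_simp
    all_goals ring
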